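/- Let n ∈ ℕ, M ≥ 0, η > 0, and set ε = η/e. Let c : (ℕ →₀ ℕ) → ℂ be a family of coefficients indexed by finitely supported multi-indices such that |c_m| ≤ M · e^{n·Σᵢ i·m(i)} · η^{−|m|} · ∏ᵢ (i!)^{−m(i)} for every m, where |m| = Σᵢ m(i). Then for every sequence a : ℕ → ℂ with |aᵢ| ≤ ε · i! · e^{−(n+1)·i} for all i, the family m ↦ c_m · ∏ᵢ aᵢ^{m(i)} is absolutely summable, with Σ_m |c_m · ∏ᵢ aᵢ^{m(i)}| ≤ M · ∏'_{i∈ℕ} (1 − e^{−(i+1)})^{−1}. -/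

import Mathlib

open Finset

private lemma mte_r_pos (i : ℕ) : 0 < Real.exp (-((i : ℝ) + 1)) := Real.exp_pos _

private lemma mte_r_lt_one (i : ℕ) : Real.exp (-((i : ℝ) + 1)) < 1 := by
  rw [Real.exp_lt_one_iff]
  have : (0 : ℝ) ≤ i := Nat.cast_nonneg i
  linarith

private lemma mte_summable_r : Summable (fun i : ℕ => Real.exp (-((i : ℝ) + 1))) := by
  have h : ∀ i : ℕ, Real.exp (-((i : ℝ) + 1)) = Real.exp (-1) * Real.exp (-1) ^ i := by
    intro i
    rw [← Real.exp_nat_mul, ← Real.exp_add]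
    ring_nf
  simp_rw [h]
  exact (summable_geometric_of_lt_one (le_of_lt (Real.exp_pos _))
    (Real.exp_lt_one_iff.2 (by norm_num))).mul_left _

private lemma mte_one_sub_pos (i : ℕ) : 0 < 1 - Real.exp (-((i : ℝ) + 1)) := by
  linarith [mte_r_lt_one i]

private lemma mte_multipliable :
    Multipliable (fun i : ℕ => (1 - Real.exp (-((i : ℝ) + 1)))⁻¹) := by
  apply Real.multipliable_of_summable_log
    (fun i => inv_pos.2 (mte_one_sub_pos i))
  have hbase : 0 < 1 - Real.exp (-(1 : ℝ)) := by
    have := Real.exp_lt_one_iff.2 (show (-1 : ℝ) < 0 by norm_num)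
    linarith
  apply Summable.of_nonneg_of_le
    (fun i => Real.log_nonneg ((one_le_inv₀ (mte_one_sub_pos i)).2 (by
      linarith [mte_r_pos i])))
    (fun i => ?_) ((mte_summable_r).mul_left (1 - Real.exp (-(1:ℝ)))⁻¹)
  have h1 : 0 < 1 - Real.exp (-((i : ℝ) + 1)) := mte_one_sub_pos i
  have h2 : Real.exp (-((i : ℝ) + 1)) ≤ Real.exp (-1 : ℝ) := by
    apply Real.exp_le_exp.2
    have : (0 : ℝ) ≤ i := Nat.cast_nonneg i
    linarith
  calc Real.log (1 - Real.exp (-((i : ℝ) + 1)))⁻¹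
      ≤ (1 - Real.exp (-((i : ℝ) + 1)))⁻¹ - 1 :=
        Real.log_le_sub_one_of_pos (inv_pos.2 h1)
    _ = Real.exp (-((i : ℝ) + 1)) / (1 - Real.exp (-((i : ℝ) + 1))) := by
        rw [inv_eq_one_div, div_sub_one (ne_of_gt h1)]
        congr 1
        ring
    _ ≤ (1 - Real.exp (-(1:ℝ)))⁻¹ * Real.exp (-((i : ℝ) + 1)) := by
        rw [div_eq_inv_mul]
        apply mul_le_mul_of_nonneg_right _ (le_of_lt (mte_r_pos i))
        apply inv_anti₀ hbase
        linarith

private lemma mte_prod_range_le_tprod (N : ℕ) :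
    ∏ i ∈ Finset.range N, (1 - Real.exp (-((i : ℝ) + 1)))⁻¹ ≤
      ∏' i : ℕ, (1 - Real.exp (-((i : ℝ) + 1)))⁻¹ := by
  have hone : ∀ i : ℕ, 1 ≤ (1 - Real.exp (-((i : ℝ) + 1)))⁻¹ := fun i =>
    (one_le_inv₀ (mte_one_sub_pos i)).2 (by linarith [mte_r_pos i])
  apply ge_of_tendsto mte_multipliable.hasProd
  filter_upwards [Filter.eventually_ge_atTop (Finset.range N)] with t ht
  have ht' : Finset.range N ⊆ t := ht
  rw [← Finset.prod_sdiff (f := fun i : ℕ => (1 - Real.exp (-((i : ℝ) + 1)))⁻¹) ht']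
  have h1 : (1 : ℝ) ≤ ∏ i ∈ t \ Finset.range N, (1 - Real.exp (-((i : ℝ) + 1)))⁻¹ := by
    calc (1 : ℝ) = ∏ _i ∈ t \ Finset.range N, (1 : ℝ) := (Finset.prod_const_one).symm
      _ ≤ _ := Finset.prod_le_prod (fun _ _ => zero_le_one) (fun i _ => hone i)
  have h2 : (0 : ℝ) ≤ ∏ i ∈ Finset.range N, (1 - Real.exp (-((i : ℝ) + 1)))⁻¹ :=
    Finset.prod_nonneg fun i _ => le_of_lt (inv_pos.2 (mte_one_sub_pos i))
  nlinarith

set_option maxHeartbeats 1000000 in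
/-- Partial sums of the geometric multi-index family are bounded by the infinite product. -/
private lemma mte_sum_le_tprod (S : Finset (ℕ →₀ ℕ)) :
    ∑ m ∈ S, (m.prod fun i k => Real.exp (-((i : ℝ) + 1)) ^ k) ≤
      ∏' i : ℕ, (1 - Real.exp (-((i : ℝ) + 1)))⁻¹ := by
  set r : ℕ → ℝ := fun i => Real.exp (-((i : ℝ) + 1)) with hr
  set N : ℕ := S.sup (fun m => m.support.sup id + 1) with hN
  set K : ℕ := S.sup (fun m => m.support.sup m) with hK
  have hsupp : ∀ m ∈ S, m.support ⊆ Finset.range N := by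
    intro m hm i hi
    rw [Finset.mem_range]
    have h1 : id i ≤ m.support.sup id := Finset.le_sup hi
    have h2 : m.support.sup id + 1 ≤ N :=
      Finset.le_sup (f := fun m : ℕ →₀ ℕ => m.support.sup id + 1) hm
    simp only [id] at h1
    omega
  have hval : ∀ m ∈ S, ∀ i : ℕ, m i ≤ K := by
    intro m hm i
    by_cases h : i ∈ m.support
    · exact le_trans (Finset.le_sup h)
        (Finset.le_sup (f := fun m : ℕ →₀ ℕ => m.support.sup ⇑m) hm)
    · simp [Finsupp.notMem_support_iff.1 h]
  -- the embedding into a finite function space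
  set e : (ℕ →₀ ℕ) → (Fin N → Fin (K + 1)) :=
    fun m i => ⟨min (m i) K, Nat.lt_succ_of_le (min_le_right _ _)⟩ with he
  have hfe : ∀ m ∈ S, (m.prod fun i k => r i ^ k) = ∏ i : Fin N, r i ^ ((e m i : ℕ)) := by
    intro m hm
    rw [Finsupp.prod_of_support_subset m (hsupp m hm) (fun i k => r i ^ k)
      (fun i _ => pow_zero _)]
    rw [← Fin.prod_univ_eq_prod_range (fun i => r i ^ m i) N]
    refine Finset.prod_congr rfl fun i _ => ?_
    congr 1
    simp [he, min_eq_left (hval m hm i)]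
  have hinj : Set.InjOn e S := by
    intro m hm m' hm' hee
    ext i
    by_cases h : i < N
    · have h2 : e m ⟨i, h⟩ = e m' ⟨i, h⟩ := congrFun hee ⟨i, h⟩
      simp only [he, Fin.mk.injEq] at h2
      rw [min_eq_left (hval m hm i), min_eq_left (hval m' hm' i)] at h2
      exact h2
    · have h1 : i ∉ m.support := fun hi => h (Finset.mem_range.1 (hsupp m hm hi))
      have h2 : i ∉ m'.support := fun hi => h (Finset.mem_range.1 (hsupp m' hm' hi))
      rw [Finsupp.notMem_support_iff.1 h1, Finsupp.notMem_support_iff.1 h2]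
  have hr01 : ∀ i : ℕ, 0 ≤ r i ∧ r i < 1 := fun i => ⟨le_of_lt (mte_r_pos i), mte_r_lt_one i⟩
  calc ∑ m ∈ S, (m.prod fun i k => r i ^ k)
      = ∑ m ∈ S, ∏ i : Fin N, r i ^ ((e m i : ℕ)) := Finset.sum_congr rfl hfe
    _ = ∑ g ∈ S.image e, ∏ i : Fin N, r i ^ ((g i : ℕ)) :=
        (Finset.sum_image (f := fun g : Fin N → Fin (K + 1) => ∏ i : Fin N, r i ^ ((g i : ℕ)))
          (g := e) (fun x hx y hy hxy => hinj hx hy hxy)).symm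
    _ ≤ ∑ g : Fin N → Fin (K + 1), ∏ i : Fin N, r i ^ ((g i : ℕ)) := by
        apply Finset.sum_le_sum_of_subset_of_nonneg (Finset.subset_univ _)
        intro g _ _
        exact Finset.prod_nonneg fun i _ => pow_nonneg (hr01 i).1 _
    _ = ∏ i : Fin N, ∑ k : Fin (K + 1), r i ^ ((k : ℕ)) := by
        rw [← Fintype.piFinset_univ]
        exact (Finset.prod_univ_sum (fun _ => Finset.univ)
          (fun (i : Fin N) (k : Fin (K + 1)) => r i ^ (k : ℕ))).symm
    _ ≤ ∏ i : Fin N, (1 - r ((i : ℕ)))⁻¹ := by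
        apply Finset.prod_le_prod
        · intro i _
          exact Finset.sum_nonneg fun k _ => pow_nonneg (hr01 i).1 _
        · intro i _
          rw [Fin.sum_univ_eq_sum_range (fun k => r ((i : ℕ)) ^ k) (K + 1)]
          have h := Summable.sum_le_tsum (Finset.range (K + 1))
            (fun k _ => pow_nonneg (hr01 i).1 k)
            (summable_geometric_of_lt_one (hr01 i).1 (hr01 i).2)
          rwa [tsum_geometric_of_lt_one (hr01 i).1 (hr01 i).2] at h
    _ = ∏ i ∈ Finset.range N, (1 - r i)⁻¹ :=
        Fin.prod_univ_eq_prod_range (fun i => (1 - r i)⁻¹) N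
    _ ≤ ∏' i : ℕ, (1 - r i)⁻¹ := mte_prod_range_le_tprod N

/-- Let `ε = η/e`. If the coefficients `c_m` satisfy
`|c_m| ≤ M · e^{n·Σᵢ i·m(i)} · η^{−|m|} · ∏ᵢ (i!)^{−m(i)}`, then for every sequence
`a : ℕ → ℂ` with `|aᵢ| ≤ ε · i! · e^{−(n+1)·i}`, the family
`m ↦ c_m · ∏ᵢ aᵢ^{m(i)}` is absolutely summable with
`Σ_m |c_m · ∏ᵢ aᵢ^{m(i)}| ≤ M · ∏'_{i∈ℕ} (1 − e^{−(i+1)})⁻¹`. -/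
theorem monomial_taylor_expansion_bound
    (n : ℕ) (M : ℝ) (hM : 0 ≤ M) (η : ℝ) (hη : 0 < η)
    (ε : ℝ) (hε : ε = η / Real.exp 1)
    (c : (ℕ →₀ ℕ) → ℂ)
    (hc : ∀ m : ℕ →₀ ℕ,
      ‖c m‖ ≤ M * Real.exp ((n : ℝ) * (m.sum fun i k => (i : ℝ) * k)) *
        (η ^ (m.sum fun _ k => k))⁻¹ * (m.prod fun i k => ((i.factorial : ℝ)) ^ k)⁻¹)
    (a : ℕ → ℂ)
    (ha : ∀ i : ℕ, ‖a i‖ ≤ ε * (i.factorial : ℝ) * Real.exp (-(((n : ℝ) + 1)) * i)) :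
    Summable (fun m : ℕ →₀ ℕ => ‖c m * m.prod fun i k => (a i) ^ k‖) ∧
    (∑' m : ℕ →₀ ℕ, ‖c m * m.prod fun i k => (a i) ^ k‖) ≤
      M * ∏' i : ℕ, (1 - Real.exp (-((i : ℝ) + 1)))⁻¹ := by
  have hε0 : 0 < ε := by rw [hε]; positivity
  set f : (ℕ →₀ ℕ) → ℝ := fun m => m.prod fun i k => Real.exp (-((i : ℝ) + 1)) ^ k with hf
  have hf0 : ∀ m, 0 ≤ f m := fun m =>
    Finset.prod_nonneg fun i _ => pow_nonneg (le_of_lt (mte_r_pos i)) _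
  -- key algebraic identity
  have key : ∀ m : ℕ →₀ ℕ,
      Real.exp ((n : ℝ) * (m.sum fun i k => (i : ℝ) * k)) *
        (η ^ (m.sum fun _ k => k))⁻¹ * (m.prod fun i k => ((i.factorial : ℝ)) ^ k)⁻¹ *
        (m.prod fun i k => (ε * (i.factorial : ℝ) * Real.exp (-(((n : ℝ) + 1)) * i)) ^ k)
      = f m := by
    intro m
    rw [hf]
    simp only [Finsupp.sum, Finsupp.prod]
    rw [Finset.mul_sum, Real.exp_sum, ← Finset.prod_pow_eq_pow_sum,
      ← Finset.prod_inv_distrib, ← Finset.prod_inv_distrib,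
      ← Finset.prod_mul_distrib, ← Finset.prod_mul_distrib, ← Finset.prod_mul_distrib]
    refine Finset.prod_congr rfl fun i _ => ?_
    have hfac : (0 : ℝ) < (i.factorial : ℝ) := by exact_mod_cast i.factorial_pos
    have h1 : Real.exp ((n : ℝ) * ((i : ℝ) * (m i))) = (Real.exp ((n : ℝ) * i)) ^ (m i) := by
      rw [← Real.exp_nat_mul]; ring_nf
    rw [h1, ← inv_pow, ← inv_pow, ← mul_pow, ← mul_pow, ← mul_pow]
    congr 1
    rw [hε]
    have hstep : Real.exp ((n : ℝ) * i) * η⁻¹ * ((i.factorial : ℝ))⁻¹ *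
        (η / Real.exp 1 * (i.factorial : ℝ) * Real.exp (-(((n : ℝ) + 1)) * i)) =
        Real.exp ((n : ℝ) * i) * Real.exp (-(((n : ℝ) + 1)) * i) * Real.exp (-1) *
          ((η⁻¹ * η) * (((i.factorial : ℝ))⁻¹ * (i.factorial : ℝ))) := by
      rw [div_eq_mul_inv, ← Real.exp_neg]
      ring
    rw [hstep, inv_mul_cancel₀ (ne_of_gt hη), inv_mul_cancel₀ (ne_of_gt hfac),
      mul_one, mul_one, ← Real.exp_add, ← Real.exp_add]
    congr 1
    ring
  -- termwise bound
  have hterm : ∀ m : ℕ →₀ ℕ, ‖c m * m.prod fun i k => (a i) ^ k‖ ≤ M * f m := by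
    intro m
    have hnorm : ‖(m.prod fun i k => (a i) ^ k : ℂ)‖ = m.prod fun i k => ‖a i‖ ^ k := by
      rw [Finsupp.prod, Finsupp.prod, norm_prod]
      exact Finset.prod_congr rfl fun i _ => norm_pow _ _
    have hprodle : (m.prod fun i k => ‖a i‖ ^ k) ≤
        m.prod fun i k => (ε * (i.factorial : ℝ) * Real.exp (-(((n : ℝ) + 1)) * i)) ^ k := by
      rw [Finsupp.prod, Finsupp.prod]
      apply Finset.prod_le_prod
      · intro i _; exact pow_nonneg (norm_nonneg _) _
      · intro i _; exact pow_le_pow_left₀ (norm_nonneg _) (ha i) _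
    calc ‖c m * m.prod fun i k => (a i) ^ k‖
        = ‖c m‖ * (m.prod fun i k => ‖a i‖ ^ k) := by rw [norm_mul, hnorm]
      _ ≤ (M * Real.exp ((n : ℝ) * (m.sum fun i k => (i : ℝ) * k)) *
            (η ^ (m.sum fun _ k => k))⁻¹ * (m.prod fun i k => ((i.factorial : ℝ)) ^ k)⁻¹) *
            (m.prod fun i k => (ε * (i.factorial : ℝ) * Real.exp (-(((n : ℝ) + 1)) * i)) ^ k) := by
          apply mul_le_mul (hc m) hprodle
            (Finset.prod_nonneg fun i _ => pow_nonneg (norm_nonneg _) _)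
          have : 0 < η ^ (m.sum fun _ k => k) := pow_pos hη _
          have : (0:ℝ) < m.prod fun i k => ((i.factorial : ℝ)) ^ k :=
            Finset.prod_pos fun i _ => pow_pos (by exact_mod_cast i.factorial_pos) _
          positivity
      _ = M * (Real.exp ((n : ℝ) * (m.sum fun i k => (i : ℝ) * k)) *
            (η ^ (m.sum fun _ k => k))⁻¹ * (m.prod fun i k => ((i.factorial : ℝ)) ^ k)⁻¹ *
            (m.prod fun i k => (ε * (i.factorial : ℝ) * Real.exp (-(((n : ℝ) + 1)) * i)) ^ k)) := by
          ring
      _ = M * f m := by rw [key m]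
  have hSf : Summable f := summable_of_sum_le hf0 mte_sum_le_tprod
  have hSMf : Summable (fun m => M * f m) := hSf.mul_left M
  have hsum : Summable (fun m : ℕ →₀ ℕ => ‖c m * m.prod fun i k => (a i) ^ k‖) :=
    Summable.of_nonneg_of_le (fun m => norm_nonneg _) hterm hSMf
  refine ⟨hsum, ?_⟩
  calc (∑' m : ℕ →₀ ℕ, ‖c m * m.prod fun i k => (a i) ^ k‖)
      ≤ ∑' m : ℕ →₀ ℕ, M * f m := Summable.tsum_le_tsum hterm hsum hSMf
    _ = M * ∑' m : ℕ →₀ ℕ, f m := tsum_mul_left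
    _ ≤ M * ∏' i : ℕ, (1 - Real.exp (-((i : ℝ) + 1)))⁻¹ := by
        apply mul_le_mul_of_nonneg_left _ hM
        exact Summable.tsum_le_of_sum_le hSf mte_sum_le_tprod
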